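/- Let p be a prime, r ≥ 1, and let φ be a unitary representation of SL₄(ℤ/p^rℤ) on a finite-dimensional complex inner product space V. Suppose v ∈ V is nonzero and satisfies φ([x;y;z]) v = exp(2πi y/p^r) · v for all integers x, y, z. Let G₂ be the subgroup of SL₄(ℤ/p^rℤ) consisting of matrices with 1 in positions (1,1) and (4,4), an arbitrary SL₂(ℤ/p^rℤ) block in rows and columns 2, 3, and 0 in all other off-diagonal positions. Then the linear span of { φ(g) v : g ∈ G₂ } has dimension equal to |SL₂(ℤ/p^rℤ)| / p^r. -/

import Mathlib

open Matrix

/-- The matrix `[x;y;z]` in SL₄(ℤ/p^r): the identity except for entries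
`x, z, y` in positions (2,3), (2,4), (3,4) (1-indexed). -/
def xyzMat (p r : ℕ) (x y z : ℤ) :
    Matrix.SpecialLinearGroup (Fin 4) (ZMod (p ^ r)) :=
  ⟨!![1, 0, 0, 0; 0, 1, (x : ZMod (p ^ r)), (z : ZMod (p ^ r));
      0, 0, 1, (y : ZMod (p ^ r)); 0, 0, 0, 1], by
    simp [Matrix.det_succ_row_zero, Fin.sum_univ_succ]⟩

set_option linter.unusedSectionVars false


section Aux
variable {n : ℕ}

def unip (t : ZMod n) : Matrix.SpecialLinearGroup (Fin 2) (ZMod n) :=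
  ⟨!![1, t; 0, 1], by simp [Matrix.det_fin_two_of]⟩

set_option maxHeartbeats 1000000 in
def emb (A : Matrix.SpecialLinearGroup (Fin 2) (ZMod n)) :
    Matrix.SpecialLinearGroup (Fin 4) (ZMod n) :=
  ⟨!![1, 0, 0, 0; 0, A.1 0 0, A.1 0 1, 0; 0, A.1 1 0, A.1 1 1, 0; 0, 0, 0, 1], by
    have h := A.2
    rw [Matrix.det_fin_two] at h
    simp [Matrix.det_succ_row_zero, Fin.sum_univ_succ]
    linear_combination h⟩

set_option maxHeartbeats 1000000 in
lemma emb_coe (A : Matrix.SpecialLinearGroup (Fin 2) (ZMod n)) :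
    (emb A).1 = !![1, 0, 0, 0; 0, A.1 0 0, A.1 0 1, 0; 0, A.1 1 0, A.1 1 1, 0; 0, 0, 0, 1] := rfl

set_option maxHeartbeats 1000000 in
lemma emb_mul (A B : Matrix.SpecialLinearGroup (Fin 2) (ZMod n)) :
    emb (A * B) = emb A * emb B := by
  apply Subtype.ext
  show (emb (A*B)).1 = (emb A).1 * (emb B).1
  simp only [emb, Matrix.SpecialLinearGroup.coe_mul]
  ext i j
  fin_cases i <;> fin_cases j <;>
    simp [Matrix.mul_apply, Fin.sum_univ_succ, Matrix.vecHead, Matrix.vecTail]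
end Aux

section B
variable (p r : ℕ) [NeZero (p ^ r)]

def Bmat (y z : ZMod (p ^ r)) : Matrix.SpecialLinearGroup (Fin 4) (ZMod (p ^ r)) :=
  xyzMat p r 0 y.val z.val

lemma Bmat_coe (y z : ZMod (p ^ r)) :
    (Bmat p r y z).1 = !![1, 0, 0, 0; 0, 1, 0, z; 0, 0, 1, y; 0, 0, 0, 1] := by
  show (!![1, 0, 0, 0; 0, 1, ((0:ℤ) : ZMod (p ^ r)), ((z.val : ℤ) : ZMod (p ^ r));
      0, 0, 1, ((y.val : ℤ) : ZMod (p ^ r)); 0, 0, 0, 1] : Matrix (Fin 4) (Fin 4) _) = _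
  push_cast
  rw [ZMod.natCast_val, ZMod.natCast_val, ZMod.cast_id, ZMod.cast_id]

set_option maxHeartbeats 1000000 in
lemma Bmat_comm (y z : ZMod (p ^ r)) (A : Matrix.SpecialLinearGroup (Fin 2) (ZMod (p ^ r))) :
    Bmat p r y z * emb A
      = emb A * Bmat p r (A.1 0 0 * y - A.1 1 0 * z) (A.1 1 1 * z - A.1 0 1 * y) := by
  have h := A.2
  rw [Matrix.det_fin_two] at h
  apply Subtype.ext
  show (Bmat p r y z).1 * (emb A).1 = (emb A).1 * (Bmat p r _ _).1
  rw [Bmat_coe, Bmat_coe, emb_coe]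
  ext i j
  fin_cases i <;> fin_cases j <;>
    simp [Matrix.mul_apply, Fin.sum_univ_succ, Matrix.vecHead, Matrix.vecTail] <;>
    first
      | ring1
      | linear_combination y * h
      | linear_combination z * h
      | linear_combination (-y) * h
      | linear_combination (-z) * h
end B

section C
variable {n : ℕ} [NeZero n]

noncomputable def colMat (a c : ZMod n) (h : IsUnit a ∨ IsUnit c) :
    Matrix.SpecialLinearGroup (Fin 2) (ZMod n) :=
  if ha : IsUnit a then
    ⟨!![a, 0; c, Ring.inverse a], by
      simp [Matrix.det_fin_two_of, Ring.mul_inverse_cancel a ha]⟩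
  else
    ⟨!![a, -Ring.inverse c; c, 0], by
      have hc : IsUnit c := h.resolve_left ha
      simp [Matrix.det_fin_two_of, Ring.mul_inverse_cancel c hc, mul_comm]⟩

lemma colMat_00 (a c : ZMod n) (h) : (colMat a c h).1 0 0 = a := by
  unfold colMat; by_cases ha : IsUnit a <;> simp [ha]

lemma colMat_10 (a c : ZMod n) (h) : (colMat a c h).1 1 0 = c := by
  unfold colMat; by_cases ha : IsUnit a <;> simp [ha]

lemma sl2_col_eq (A A' : Matrix.SpecialLinearGroup (Fin 2) (ZMod n))
    (h0 : A.1 0 0 = A'.1 0 0) (h1 : A.1 1 0 = A'.1 1 0) :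
    ∃ t, A' = A * unip t := by
  set B := A⁻¹ * A' with hB
  have hAB : A' = A * B := by rw [hB]; group
  have hdA := A.2
  rw [Matrix.det_fin_two] at hdA
  have hBc : B.1 = (A⁻¹).1 * A'.1 := rfl
  rw [Matrix.SpecialLinearGroup.SL2_inv_expl] at hBc
  have hB00 : B.1 0 0 = 1 := by
    rw [hBc, Matrix.mul_apply]
    simp [Matrix.mul_apply, Fin.sum_univ_succ, ← h0, ← h1]
    linear_combination hdA
  have hB10 : B.1 1 0 = 0 := by
    rw [hBc, Matrix.mul_apply]
    simp [Matrix.mul_apply, Fin.sum_univ_succ, ← h0, ← h1]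
    ring
  have hdB := B.2
  rw [Matrix.det_fin_two, hB00, hB10] at hdB
  refine ⟨B.1 0 1, ?_⟩
  rw [hAB]
  congr 1
  apply Subtype.ext
  show B.1 = _
  ext i j
  fin_cases i <;> fin_cases j <;>
    simp [unip, hB00, hB10]
  linear_combination hdB
end C

section D
variable {n : ℕ} [NeZero n]

lemma det_blk (a b c d : ZMod n) :
    (!![1, 0, 0, 0; 0, a, b, 0; 0, c, d, 0; 0, 0, 0, 1] :
      Matrix (Fin 4) (Fin 4) (ZMod n)).det = a * d - b * c := by
  simp [Matrix.det_succ_row_zero, Fin.sum_univ_succ]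
  ring

lemma mul_unip_col (A : Matrix.SpecialLinearGroup (Fin 2) (ZMod n)) (t : ZMod n) (i : Fin 2) :
    (A * unip t).1 i 0 = A.1 i 0 := by
  show (A.1 * (unip t).1) i 0 = _
  simp [unip, Matrix.mul_apply, Fin.sum_univ_succ]

lemma unit_or {p r : ℕ} (hp : p.Prime) (hr : 1 ≤ r) (a b c d : ZMod (p ^ r))
    (h : a * d - b * c = 1) : IsUnit a ∨ IsUnit c := by
  haveI : Fact (1 < p ^ r) := ⟨Nat.one_lt_pow (by omega) hp.one_lt⟩
  by_contra hcon
  push_neg at hcon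
  have key : ∀ x : ZMod (p ^ r), ¬IsUnit x → ∃ x', x = (p : ZMod (p ^ r)) * x' := by
    intro x hx
    by_cases hdvd : p ∣ x.val
    · obtain ⟨k, hk⟩ := hdvd
      exact ⟨(k : ZMod (p ^ r)), by rw [← Nat.cast_mul, ← hk, ZMod.natCast_val, ZMod.cast_id]⟩
    · exfalso
      apply hx
      have hcop : Nat.Coprime x.val (p ^ r) :=
        Nat.Coprime.pow_right r ((Nat.Prime.coprime_iff_not_dvd hp).mpr hdvd).symm
      have := (ZMod.isUnit_iff_coprime x.val (p ^ r)).mpr hcop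
      rwa [ZMod.natCast_val, ZMod.cast_id] at this
  obtain ⟨a', ha⟩ := key a hcon.1
  obtain ⟨c', hc⟩ := key c hcon.2
  have hpu : IsUnit ((p : ZMod (p ^ r))) := by
    apply IsUnit.of_mul_eq_one (a' * d - b * c')
    rw [← h, ha, hc]; ring
  have h0 : ((p : ZMod (p ^ r))) ^ r = 0 := by
    rw [← Nat.cast_pow, ZMod.natCast_self]
  have := hpu.pow r
  rw [h0, isUnit_zero_iff] at this
  exact zero_ne_one this
end D

section E
variable {p r : ℕ}

lemma unip_inj {n : ℕ} (s1 s2 : ZMod n) (h : unip s1 = unip s2) : s1 = s2 := by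
  have := congrArg (fun A : Matrix.SpecialLinearGroup (Fin 2) (ZMod n) => A.1 0 1) h
  simpa [unip] using this

lemma card_SL2 (hp : p.Prime) (hr : 1 ≤ r) [NeZero (p ^ r)] :
    Nat.card (Matrix.SpecialLinearGroup (Fin 2) (ZMod (p ^ r)))
      = Nat.card {x : ZMod (p ^ r) × ZMod (p ^ r) // IsUnit x.1 ∨ IsUnit x.2} * p ^ r := by
  set T := {x : ZMod (p ^ r) × ZMod (p ^ r) // IsUnit x.1 ∨ IsUnit x.2}
  let f : T × ZMod (p ^ r) → Matrix.SpecialLinearGroup (Fin 2) (ZMod (p ^ r)) :=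
    fun P => colMat P.1.1.1 P.1.1.2 P.1.2 * unip P.2
  have hbij : Function.Bijective f := by
    constructor
    · rintro ⟨⟨⟨a1, c1⟩, h1⟩, s1⟩ ⟨⟨⟨a2, c2⟩, h2⟩, s2⟩ heq
      have e0 := congrArg (fun A : Matrix.SpecialLinearGroup (Fin 2) (ZMod (p ^ r)) =>
        A.1 0 0) heq
      have e1 := congrArg (fun A : Matrix.SpecialLinearGroup (Fin 2) (ZMod (p ^ r)) =>
        A.1 1 0) heq
      simp only [f, mul_unip_col, colMat_00, colMat_10] at e0 e1
      subst e0; subst e1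
      have : s1 = s2 := by
        apply unip_inj
        exact mul_left_cancel heq
      subst this
      rfl
    · intro A
      have hd := A.2
      rw [Matrix.det_fin_two] at hd
      have hT : IsUnit (A.1 0 0) ∨ IsUnit (A.1 1 0) :=
        unit_or hp hr _ (A.1 0 1) _ (A.1 1 1) hd
      obtain ⟨t, ht⟩ := sl2_col_eq (colMat _ _ hT) A (colMat_00 _ _ _) (colMat_10 _ _ _)
      exact ⟨⟨⟨(A.1 0 0, A.1 1 0), hT⟩, t⟩, ht.symm⟩
  rw [← Nat.card_congr (Equiv.ofBijective f hbij), Nat.card_prod, Nat.card_zmod]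
end E

section F
variable (p r : ℕ) [NeZero (p ^ r)]

lemma emb_unip (t : ZMod (p ^ r)) : emb (unip t) = xyzMat p r t.val 0 0 := by
  apply Subtype.ext
  show _ = (xyzMat p r t.val 0 0).1
  rw [emb_coe]
  ext i j
  fin_cases i <;> fin_cases j <;>
    simp [unip, xyzMat, ZMod.natCast_val, ZMod.cast_id]
end F
theorem stmt14 (p : ℕ) (hp : p.Prime) (r : ℕ) (hr : 1 ≤ r)
    {V : Type*} [NormedAddCommGroup V] [InnerProductSpace ℂ V]
    [FiniteDimensional ℂ V]
    (φ : Matrix.SpecialLinearGroup (Fin 4) (ZMod (p ^ r)) →* unitary (V →L[ℂ] V))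
    (v : V) (hv : v ≠ 0)
    (hchar : ∀ x y z : ℤ,
      (φ (xyzMat p r x y z) : V →L[ℂ] V) v
        = Complex.exp (2 * Real.pi * Complex.I * ((y : ℂ) / (p : ℂ) ^ r)) • v) :
    Module.finrank ℂ
      (Submodule.span ℂ {w : V | ∃ g : Matrix.SpecialLinearGroup (Fin 4) (ZMod (p ^ r)),
        (∃ a b c d : ZMod (p ^ r),
          (g : Matrix (Fin 4) (Fin 4) (ZMod (p ^ r)))
            = !![1, 0, 0, 0; 0, a, b, 0; 0, c, d, 0; 0, 0, 0, 1])
        ∧ w = (φ g : V →L[ℂ] V) v})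
    = Nat.card (Matrix.SpecialLinearGroup (Fin 2) (ZMod (p ^ r))) / p ^ r := by
  classical
  haveI : NeZero (p ^ r) := ⟨pow_ne_zero r hp.pos.ne'⟩
  set e := (ZMod.stdAddChar (N := p ^ r)) with he
  -- applying φ of a product
  have key : ∀ g h : Matrix.SpecialLinearGroup (Fin 4) (ZMod (p ^ r)),
      (φ (g * h) : V →L[ℂ] V) v = (φ g : V →L[ℂ] V) ((φ h : V →L[ℂ] V) v) := by
    intro g h
    rw [_root_.map_mul]
    rfl
  -- the basic eigenvector property
  have hBv : ∀ y z : ZMod (p ^ r), (φ (Bmat p r y z) : V →L[ℂ] V) v = e y • v := by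
    intro y z
    have h1 := hchar 0 (y.val : ℤ) (z.val : ℤ)
    have h2 : xyzMat p r 0 (y.val : ℤ) (z.val : ℤ) = Bmat p r y z := rfl
    rw [h2] at h1
    have h3 : e y = Complex.exp (2 * Real.pi * Complex.I * (((y.val : ℤ) : ℂ) / (p : ℂ) ^ r)) := by
      conv_lhs => rw [he, show y = ((y.val : ℤ) : ZMod (p ^ r)) by
        simp [ZMod.natCast_val, ZMod.cast_id]]
      rw [ZMod.stdAddChar_coe]
      push_cast
      ring_nf
    rw [h1, h3]
  -- nonvanishing
  have hφv : ∀ g : Matrix.SpecialLinearGroup (Fin 4) (ZMod (p ^ r)),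
      (φ g : V →L[ℂ] V) v ≠ 0 := by
    intro g hzero
    have h1 : (φ g⁻¹ : V →L[ℂ] V) ((φ g : V →L[ℂ] V) v) = v := by
      rw [← key g⁻¹ g, inv_mul_cancel, _root_.map_one]
      rfl
    rw [hzero, map_zero] at h1
    exact hv h1.symm
  -- eigenvector property after translating
  have hwA : ∀ (A : Matrix.SpecialLinearGroup (Fin 2) (ZMod (p ^ r))) (y z : ZMod (p ^ r)),
      (φ (Bmat p r y z) : V →L[ℂ] V) ((φ (emb A) : V →L[ℂ] V) v)
        = e (A.1 0 0 * y - A.1 1 0 * z) • (φ (emb A) : V →L[ℂ] V) v := by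
    intro A y z
    rw [← key, Bmat_comm, key, hBv, _root_.map_smul]
  -- same first column gives the same vector
  have hsame : ∀ A A' : Matrix.SpecialLinearGroup (Fin 2) (ZMod (p ^ r)),
      A.1 0 0 = A'.1 0 0 → A.1 1 0 = A'.1 1 0 →
      (φ (emb A') : V →L[ℂ] V) v = (φ (emb A) : V →L[ℂ] V) v := by
    intro A A' h0 h1
    obtain ⟨t, ht⟩ := sl2_col_eq A A' h0 h1
    rw [ht, emb_mul, key, emb_unip, hchar]
    norm_num
  set T := {x : ZMod (p ^ r) × ZMod (p ^ r) // IsUnit x.1 ∨ IsUnit x.2} with hT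
  set w : T → V := fun t => (φ (emb (colMat t.1.1 t.1.2 t.2)) : V →L[ℂ] V) v with hwdef
  have hwe : ∀ (t : T) (y z : ZMod (p ^ r)),
      (φ (Bmat p r y z) : V →L[ℂ] V) (w t) = e (t.1.1 * y - t.1.2 * z) • w t := by
    intro t y z
    have := hwA (colMat t.1.1 t.1.2 t.2) y z
    rwa [colMat_00, colMat_10] at this
  -- the span set is the range of w
  have hS : {w : V | ∃ g : Matrix.SpecialLinearGroup (Fin 4) (ZMod (p ^ r)),
        (∃ a b c d : ZMod (p ^ r),
          (g : Matrix (Fin 4) (Fin 4) (ZMod (p ^ r)))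
            = !![1, 0, 0, 0; 0, a, b, 0; 0, c, d, 0; 0, 0, 0, 1])
        ∧ w = (φ g : V →L[ℂ] V) v} = Set.range w := by
    ext u
    constructor
    · rintro ⟨g, ⟨a, b, c, d, hg⟩, rfl⟩
      have hd : a * d - b * c = 1 := by
        have h2 := g.2
        rw [hg, det_blk] at h2
        exact h2
      have hTm : IsUnit a ∨ IsUnit c := unit_or hp hr a b c d hd
      set A : Matrix.SpecialLinearGroup (Fin 2) (ZMod (p ^ r)) :=
        ⟨!![a, b; c, d], by rw [Matrix.det_fin_two_of]; exact hd⟩ with hA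
      have hgA : g = emb A := by
        apply Subtype.ext
        rw [emb_coe, hg, hA]
        norm_num
      refine ⟨⟨(a, c), hTm⟩, ?_⟩
      show (φ (emb (colMat a c hTm)) : V →L[ℂ] V) v = _
      rw [hgA]
      exact hsame A (colMat a c hTm)
        (by rw [colMat_00, hA]; norm_num)
        (by rw [colMat_10, hA]; norm_num)
    · rintro ⟨t, rfl⟩
      exact ⟨emb (colMat t.1.1 t.1.2 t.2),
        ⟨(colMat t.1.1 t.1.2 t.2).1 0 0, (colMat t.1.1 t.1.2 t.2).1 0 1,
         (colMat t.1.1 t.1.2 t.2).1 1 0, (colMat t.1.1 t.1.2 t.2).1 1 1,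
         emb_coe _⟩, rfl⟩
  -- linear independence
  have hli : LinearIndependent ℂ w := by
    rw [linearIndependent_iff']
    intro s g0 hsum i hi
    have h1 : ∀ y z : ZMod (p ^ r),
        ∑ j ∈ s, (g0 j * (e (j.1.1 * y - j.1.2 * z) * e (-(i.1.1 * y - i.1.2 * z)))) • w j
          = 0 := by
      intro y z
      have h2 := congrArg (fun u => (φ (Bmat p r y z) : V →L[ℂ] V) u) hsum
      simp only [map_sum, map_zero] at h2
      have h3 := congrArg (fun u => e (-(i.1.1 * y - i.1.2 * z)) • u) h2
      simp only [Finset.smul_sum, smul_zero] at h3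
      rw [← h3]
      apply Finset.sum_congr rfl
      intro j hj
      rw [_root_.map_smul, hwe j y z, smul_smul, smul_smul]
      congr 1
      ring
    have h4 : ∑ j ∈ s,
        (g0 j * ∑ x : ZMod (p ^ r) × ZMod (p ^ r),
          e (j.1.1 * x.1 - j.1.2 * x.2) * e (-(i.1.1 * x.1 - i.1.2 * x.2))) • w j = 0 := by
      calc ∑ j ∈ s, (g0 j * ∑ x : ZMod (p ^ r) × ZMod (p ^ r),
            e (j.1.1 * x.1 - j.1.2 * x.2) * e (-(i.1.1 * x.1 - i.1.2 * x.2))) • w j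
          = ∑ j ∈ s, ∑ x : ZMod (p ^ r) × ZMod (p ^ r),
            (g0 j * (e (j.1.1 * x.1 - j.1.2 * x.2) * e (-(i.1.1 * x.1 - i.1.2 * x.2)))) • w j := by
            apply Finset.sum_congr rfl
            intro j hj
            rw [Finset.mul_sum, Finset.sum_smul]
        _ = ∑ x : ZMod (p ^ r) × ZMod (p ^ r), ∑ j ∈ s,
            (g0 j * (e (j.1.1 * x.1 - j.1.2 * x.2) * e (-(i.1.1 * x.1 - i.1.2 * x.2)))) • w j :=
            Finset.sum_comm
        _ = 0 := Finset.sum_eq_zero fun x _ => h1 x.1 x.2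
    have hcoef : ∀ j : T,
        (∑ x : ZMod (p ^ r) × ZMod (p ^ r),
          e (j.1.1 * x.1 - j.1.2 * x.2) * e (-(i.1.1 * x.1 - i.1.2 * x.2)))
        = if j = i then ((p ^ r : ℕ) : ℂ) * ((p ^ r : ℕ) : ℂ) else 0 := by
      intro j
      have hrw : ∀ x : ZMod (p ^ r) × ZMod (p ^ r),
          e (j.1.1 * x.1 - j.1.2 * x.2) * e (-(i.1.1 * x.1 - i.1.2 * x.2))
            = e (x.1 * (j.1.1 - i.1.1)) * e (x.2 * (i.1.2 - j.1.2)) := by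
        intro x
        rw [← AddChar.map_add_eq_mul, ← AddChar.map_add_eq_mul]
        congr 1
        ring
      rw [Finset.sum_congr rfl fun x _ => hrw x, Fintype.sum_prod_type]
      dsimp only
      rw [← Finset.sum_mul_sum, he,
        AddChar.sum_mulShift _ (ZMod.isPrimitive_stdAddChar _),
        AddChar.sum_mulShift _ (ZMod.isPrimitive_stdAddChar _)]
      by_cases hji : j = i
      · subst hji
        simp [ZMod.card]
      · have : j.1.1 - i.1.1 ≠ 0 ∨ i.1.2 - j.1.2 ≠ 0 := by
          by_contra hc
          push_neg at hc
          apply hji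
          apply Subtype.ext
          apply Prod.ext
          · have := hc.1; rwa [sub_eq_zero] at this
          · have := hc.2; rw [sub_eq_zero] at this; exact this.symm
        rcases this with h | h
        · rw [if_neg h, if_neg hji]
          ring
        · rw [if_neg h, if_neg hji]
          ring
    have h6 : (g0 i * (((p ^ r : ℕ) : ℂ) * ((p ^ r : ℕ) : ℂ))) • w i = 0 := by
      rw [← h4, Finset.sum_congr rfl fun j _ => by rw [hcoef j]]
      rw [Finset.sum_eq_single_of_mem i hi]
      · rw [if_pos rfl]
      · intro b _ hb
        rw [if_neg hb, mul_zero, zero_smul]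
    rcases smul_eq_zero.mp h6 with h | h
    · rcases mul_eq_zero.mp h with h' | h'
      · exact h'
      · exfalso
        rcases mul_eq_zero.mp h' with h'' | h'' <;>
        · rw [Nat.cast_eq_zero] at h''
          exact (NeZero.ne (p ^ r)) h''
    · exact absurd h (hφv _)
  -- conclude
  rw [hS, finrank_span_eq_card hli, card_SL2 hp hr, Nat.card_eq_fintype_card,
    Nat.mul_div_cancel _ (Nat.pos_of_ne_zero (NeZero.ne (p ^ r)))]
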